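/- arXiv:1205.0344 — 2 statements merged into one kernel-verified Lean document; each statement's English description precedes it below -/
import Mathlib

section
/- For every positive integer n, T(n) equals the sum of T(r-1) taken over all positive divisors r of n, i.e. T(n) = Σ_{r | n} T(r-1). -/
/-- `f (a₁,…,a_k)` defined by `f(a₁) = a₁`, `f(a₁,…,a_{i+1}) = (f(a₁,…,a_i) + 1) · a_{i+1}`. -/
def f (l : List ℕ) : ℕ := l.foldl (fun acc a => (acc + 1) * a) 0

/-- `T n` is the number of nonempty finite sequences of positive integers with `f A = n`,
with the additional convention `T 0 = 1`. -/
noncomputable def T : ℕ → ℕ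
  | 0 => 1
  | n + 1 => Nat.card {l : List ℕ // l ≠ [] ∧ (∀ a ∈ l, 0 < a) ∧ f l = n + 1}

lemma foldl_ge (l : List ℕ) (init : ℕ) (h : ∀ a ∈ l, 0 < a) :
    init + l.length ≤ l.foldl (fun acc a => (acc + 1) * a) init := by
  induction l generalizing init with
  | nil => simp
  | cons a t ih =>
    have ha : 0 < a := h a List.mem_cons_self
    have h1 : init + 1 ≤ (init + 1) * a := Nat.le_mul_of_pos_right _ ha
    have h2 := ih ((init + 1) * a) (fun b hb => h b (List.mem_cons_of_mem a hb))
    simp only [List.foldl_cons, List.length_cons]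
    omega

lemma f_pos (l : List ℕ) (hne : l ≠ []) (h : ∀ a ∈ l, 0 < a) : 0 < f l := by
  have := foldl_ge l 0 h
  have : 0 < l.length := List.length_pos_iff.mpr hne
  unfold f
  have := foldl_ge l 0 h
  omega

/-- reversed-representation set -/
def R (n : ℕ) := {l : List ℕ // (∀ a ∈ l, 0 < a) ∧ f l.reverse = n}

lemma R_zero_eq (l : R 0) : l.1 = [] := by
  obtain ⟨l, hpos, hf⟩ := l
  by_contra hne
  have hne' : l.reverse ≠ [] := by simpa using hne
  have : 0 < f l.reverse := f_pos _ hne' (by intro a ha; exact hpos a (by simpa using ha))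
  omega

noncomputable instance : Unique (R 0) := by
  refine ⟨⟨⟨[], by simp, by simp [f]⟩⟩, ?_⟩
  intro l
  have := R_zero_eq l
  exact Subtype.ext this

lemma f_concat (t : List ℕ) (r : ℕ) : f (t ++ [r]) = (f t + 1) * r := by
  unfold f
  rw [List.foldl_append]
  rfl

/-- The gluing map from the sigma type to `R (n+1)`. -/
def glue (n : ℕ) (x : Σ r : (n + 1).divisors, R ((n + 1) / (r : ℕ) - 1)) : R (n + 1) := by
  refine ⟨(x.1 : ℕ) :: x.2.1, ?_, ?_⟩
  · intro a ha
    rcases List.mem_cons.mp ha with h | h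
    · subst h
      exact Nat.pos_of_mem_divisors x.1.2
    · exact x.2.2.1 a h
  · have hr : (x.1 : ℕ) ∣ n + 1 := (Nat.mem_divisors.mp x.1.2).1
    have hrpos : 0 < (x.1 : ℕ) := Nat.pos_of_mem_divisors x.1.2
    have hq : 0 < (n + 1) / (x.1 : ℕ) := Nat.div_pos (Nat.le_of_dvd (Nat.succ_pos n) hr) hrpos
    have hf := x.2.2.2
    rw [List.reverse_cons, f_concat, hf]
    have : (n + 1) / (x.1 : ℕ) - 1 + 1 = (n + 1) / (x.1 : ℕ) := by omega
    rw [this, Nat.div_mul_cancel hr]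

lemma glue_bijective (n : ℕ) : Function.Bijective (glue n) := by
  constructor
  · rintro ⟨⟨r₁, hr₁⟩, ⟨t₁, ht₁⟩⟩ ⟨⟨r₂, hr₂⟩, ⟨t₂, ht₂⟩⟩ h
    have hc : r₁ :: t₁ = r₂ :: t₂ := congrArg Subtype.val h
    have h1 : r₁ = r₂ := by injection hc
    have h2 : t₁ = t₂ := by injection hc
    subst h1; subst h2; rfl
  · rintro ⟨l, hpos, hf⟩
    have hne : l ≠ [] := by
      rintro rfl
      simp [f] at hf
    obtain ⟨r, t, rfl⟩ := List.exists_cons_of_ne_nil hne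
    have hrpos : 0 < r := hpos r List.mem_cons_self
    have hkey : (f t.reverse + 1) * r = n + 1 := by
      rw [← f_concat, ← List.reverse_cons]; exact hf
    have hrdvd : r ∣ n + 1 := Dvd.intro_left _ hkey
    have hdiv : (n + 1) / r = f t.reverse + 1 := by
      rw [← hkey, Nat.mul_div_cancel _ hrpos]
    refine ⟨⟨⟨r, Nat.mem_divisors.mpr ⟨hrdvd, Nat.succ_ne_zero n⟩⟩,
      ⟨t, fun a ha => hpos a (List.mem_cons_of_mem r ha), by
        show f t.reverse = (n + 1) / r - 1
        omega⟩⟩, ?_⟩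
    simp [glue]
    rfl

lemma R_finite (n : ℕ) : Finite (R n) := by
  induction n using Nat.strong_induction_on with
  | _ n ih =>
    match n with
    | 0 => infer_instance
    | n + 1 =>
      haveI : ∀ r : (n + 1).divisors, Finite (R ((n + 1) / (r : ℕ) - 1)) := by
        intro r
        have hrpos : 0 < (r : ℕ) := Nat.pos_of_mem_divisors r.2
        have : (n + 1) / (r : ℕ) - 1 < n + 1 := by
          have : (n + 1) / (r : ℕ) ≤ n + 1 := Nat.div_le_self _ _
          omega
        exact ih _ this
      exact Finite.of_surjective (glue n) (glue_bijective n).2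

lemma card_R (n : ℕ) : Nat.card (R (n + 1)) = ∑ r ∈ (n + 1).divisors, Nat.card (R ((n + 1) / r - 1)) := by
  haveI : ∀ m, Finite (R m) := R_finite
  rw [← Nat.card_eq_of_bijective (glue n) (glue_bijective n)]
  haveI : ∀ r : (n + 1).divisors, Fintype (R ((n + 1) / (r : ℕ) - 1)) := fun r => Fintype.ofFinite _
  rw [Nat.card_eq_fintype_card, Fintype.card_sigma]
  rw [← Finset.sum_coe_sort ((n + 1).divisors) (fun r => Nat.card (R ((n + 1) / r - 1)))]
  exact Finset.sum_congr rfl fun r _ => Nat.card_eq_fintype_card.symm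

lemma T_eq_card_R (n : ℕ) : T n = Nat.card (R n) := by
  match n with
  | 0 => simp [T, Nat.card_unique]
  | n + 1 =>
    show Nat.card _ = _
    apply Nat.card_eq_of_bijective
      (f := fun (l : {l : List ℕ // l ≠ [] ∧ (∀ a ∈ l, 0 < a) ∧ f l = n + 1}) =>
        (⟨l.1.reverse, by
          constructor
          · intro a ha; exact l.2.2.1 a (by simpa using ha)
          · simpa using l.2.2.2⟩ : R (n + 1)))
    constructor
    · rintro ⟨l₁, h₁⟩ ⟨l₂, h₂⟩ h
      have : l₁.reverse = l₂.reverse := congrArg Subtype.val h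
      exact Subtype.ext (List.reverse_injective this)
    · rintro ⟨l, hpos, hf⟩
      have hne : l.reverse ≠ [] := by
        rintro h
        have : l = [] := by simpa using congrArg List.reverse h
        subst this
        simp [f] at hf
      refine ⟨⟨l.reverse, hne, fun a ha => hpos a (by simpa using ha), hf⟩, ?_⟩
      simp

theorem T_eq_sum_divisors (n : ℕ) (hn : 0 < n) :
    T n = ∑ r ∈ n.divisors, T (r - 1) := by
  obtain ⟨m, rfl⟩ := Nat.exists_eq_succ_of_ne_zero hn.ne'
  rw [T_eq_card_R, card_R]
  have h1 : ∑ r ∈ (m + 1).divisors, Nat.card (R ((m + 1) / r - 1))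
      = ∑ r ∈ (m + 1).divisors, T ((m + 1) / r - 1) :=
    Finset.sum_congr rfl fun r _ => (T_eq_card_R _).symm
  rw [h1]
  have := Nat.sum_div_divisors (m + 1) (fun r => T (r - 1))
  simpa using this
end

section
/- For every integer n ≥ 2, the difference T*(n) = T(n) − T(n−1) equals the sum of T(r−1) over all divisors r of n with 1 ≤ r < n, i.e. T(n) − T(n−1) = Σ_{r | n, r < n} T(r−1). -/
namespace TstarAux

def A (n : ℕ) : Set (List ℕ) := {l | l ≠ [] ∧ (∀ a ∈ l, 0 < a) ∧ f l = n}

lemma f_append (l : List ℕ) (a : ℕ) : f (l ++ [a]) = (f l + 1) * a := by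
  simp [f, List.foldl_append]

lemma le_f {l : List ℕ} (hpos : ∀ a ∈ l, 0 < a) {a : ℕ} (ha : a ∈ l) : a ≤ f l := by
  induction l using List.reverseRecOn with
  | nil => simp at ha
  | append_singleton l b ih =>
    rw [f_append]
    have hb : 0 < b := hpos b (by simp)
    rcases List.mem_append.mp ha with h | h
    · have h1 := ih (fun x hx => hpos x (by simp [hx])) h
      have h2 : f l + 1 ≤ (f l + 1) * b := Nat.le_mul_of_pos_right _ hb
      omega
    · simp only [List.mem_singleton] at h
      subst h
      exact Nat.le_mul_of_pos_left _ (by omega)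

lemma length_le_f {l : List ℕ} (hpos : ∀ a ∈ l, 0 < a) : l.length ≤ f l := by
  induction l using List.reverseRecOn with
  | nil => simp [f]
  | append_singleton l b ih =>
    have hb : 0 < b := hpos b (by simp)
    have h1 := ih (fun x hx => hpos x (by simp [hx]))
    rw [f_append]
    have h2 : f l + 1 ≤ (f l + 1) * b := Nat.le_mul_of_pos_right _ hb
    simp only [List.length_append, List.length_singleton]
    omega

lemma one_le_f {l : List ℕ} (hne : l ≠ []) (hpos : ∀ a ∈ l, 0 < a) : 1 ≤ f l := by
  have := length_le_f hpos
  have : 0 < l.length := List.length_pos_iff.mpr hne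
  omega

lemma A_finite (n : ℕ) : (A n).Finite := by
  have hsub : A n ⊆ (fun l : List (Fin (n + 1)) => l.map Fin.val) ''
      {l : List (Fin (n + 1)) | l.length ≤ n} := by
    rintro l ⟨hne, hpos, hf⟩
    refine ⟨l.map (fun a => (⟨a % (n + 1), Nat.mod_lt a (by omega)⟩ : Fin (n + 1))), ?_, ?_⟩
    · simp only [Set.mem_setOf_eq, List.length_map]
      have := length_le_f hpos
      omega
    · simp only [List.map_map, Function.comp]
      conv_rhs => rw [← List.map_id l]
      apply List.map_congr_left
      intro a ha
      have h1 : a ≤ n := by have := le_f hpos ha; omega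
      simp only [id]
      exact Nat.mod_eq_of_lt (by omega)
  exact Set.Finite.subset ((List.finite_length_le _ n).image _) hsub

lemma A_decomp (n : ℕ) (hn : 1 ≤ n) :
    A n = insert [n] (⋃ r ∈ (n.divisors.filter (2 ≤ ·) : Finset ℕ),
      (· ++ [n / r]) '' A (r - 1)) := by
  ext l
  constructor
  · rintro ⟨hne, hpos, hf⟩
    rcases List.eq_nil_or_concat l with rfl | ⟨l', a, rfl⟩
    · exact absurd rfl hne
    simp only [List.concat_eq_append] at hne hpos hf ⊢
    rcases eq_or_ne l' [] with rfl | hl'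
    · have han : a = n := by rw [← hf]; simp [f]
      subst han
      simp only [List.nil_append]
      exact Set.mem_insert _ _
    · refine Set.mem_insert_iff.mpr (Or.inr ?_)
      have hposl' : ∀ x ∈ l', 0 < x := fun x hx => hpos x (by simp [hx])
      have hfl' : 1 ≤ f l' := one_le_f hl' hposl'
      have hfa : (f l' + 1) * a = n := by rw [← f_append]; exact hf
      set r := f l' + 1 with hr
      have hrdvd : r ∣ n := ⟨a, hfa.symm⟩
      have ha0 : 0 < a := hpos a (by simp)
      have hna : n / r = a := by
        rw [← hfa]; exact Nat.mul_div_cancel_left a (by omega)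
      refine Set.mem_iUnion₂.mpr ⟨r, ?_, ?_⟩
      · exact Finset.mem_filter.mpr ⟨Nat.mem_divisors.mpr ⟨hrdvd, by omega⟩, by omega⟩
      · exact ⟨l', ⟨hl', hposl', by omega⟩, by rw [hna]⟩
  · intro hl
    rcases Set.mem_insert_iff.mp hl with rfl | hl
    · refine ⟨by simp, by intro a ha; simp at ha; omega, by simp [f]⟩
    · rw [Set.mem_iUnion₂] at hl
      obtain ⟨r, hr, l', ⟨hne, hpos, hf⟩, rfl⟩ := hl
      rw [Finset.mem_filter, Nat.mem_divisors] at hr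
      obtain ⟨⟨hrdvd, hn0⟩, hr2⟩ := hr
      have hdiv0 : 0 < n / r := Nat.div_pos (Nat.le_of_dvd (by omega) hrdvd) (by omega)
      refine ⟨by simp, ?_, ?_⟩
      · intro x hx
        rcases List.mem_append.mp hx with h | h
        · exact hpos x h
        · simp only [List.mem_singleton] at h; omega
      · rw [f_append, hf]
        have : r - 1 + 1 = r := by omega
        rw [this]
        exact Nat.mul_div_cancel' hrdvd

lemma ncard_A (n : ℕ) (hn : 1 ≤ n) :
    (A n).ncard = 1 + ∑ r ∈ n.divisors.filter (2 ≤ ·), (A (r - 1)).ncard := by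
  classical
  rw [A_decomp n hn]
  have hUfin : (⋃ r ∈ (n.divisors.filter (2 ≤ ·) : Finset ℕ),
      (· ++ [n / r]) '' A (r - 1)).Finite := by
    apply Set.Finite.biUnion (Finset.finite_toSet _)
    intro r _
    exact (A_finite (r - 1)).image _
  have hnotmem : [n] ∉ (⋃ r ∈ (n.divisors.filter (2 ≤ ·) : Finset ℕ),
      (· ++ [n / r]) '' A (r - 1)) := by
    rw [Set.mem_iUnion₂]
    rintro ⟨r, hr, l', ⟨hne, -, -⟩, heq⟩
    have h1 : ([n] : List ℕ).length = l'.length + 1 := by rw [← heq]; simp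
    have h2 : 0 < l'.length := List.length_pos_iff.mpr hne
    simp only [List.length_singleton] at h1
    omega
  rw [Set.ncard_insert_of_notMem hnotmem hUfin]
  have key : (⋃ r ∈ (n.divisors.filter (2 ≤ ·) : Finset ℕ),
      (· ++ [n / r]) '' A (r - 1)).ncard
      = ∑ r ∈ n.divisors.filter (2 ≤ ·), (A (r - 1)).ncard := by
    rw [Set.ncard_eq_toFinset_card _ hUfin]
    have heq : hUfin.toFinset = (n.divisors.filter (2 ≤ ·)).biUnion
        (fun r => ((A_finite (r - 1)).toFinset.image (· ++ [n / r]))) := by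
      ext l
      simp [Set.Finite.mem_toFinset, Set.mem_iUnion₂, Finset.mem_biUnion]
    rw [heq, Finset.card_biUnion]
    · apply Finset.sum_congr rfl
      intro r _
      rw [Finset.card_image_of_injective _ (fun x y h => by simpa using h)]
      rw [Set.ncard_eq_toFinset_card _ (A_finite (r - 1))]
    · intro r hr s hs hrs
      simp only [Finset.mem_coe, Finset.mem_filter, Nat.mem_divisors] at hr hs
      rw [Function.onFun, Finset.disjoint_left]
      rintro l hl1 hl2
      simp only [Finset.mem_image, Set.Finite.mem_toFinset] at hl1 hl2
      obtain ⟨l1, hl1m, rfl⟩ := hl1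
      obtain ⟨l2, hl2m, heq⟩ := hl2
      have hlast : n / s = n / r := by
        have := congrArg List.getLast? heq
        simpa using this
      apply hrs
      have hn0 : n ≠ 0 := hr.1.2
      calc r = n / (n / r) := (Nat.div_div_self hr.1.1 hn0).symm
        _ = n / (n / s) := by rw [hlast]
        _ = s := Nat.div_div_self hs.1.1 hn0
  omega

lemma T_eq_ncard (m : ℕ) (hm : 1 ≤ m) : T m = (A m).ncard := by
  obtain ⟨k, rfl⟩ := Nat.exists_eq_succ_of_ne_zero (by omega : m ≠ 0)
  show Nat.card {l : List ℕ // l ≠ [] ∧ (∀ a ∈ l, 0 < a) ∧ f l = k + 1} = _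
  rw [← Nat.card_coe_set_eq]
  rfl

end TstarAux

open TstarAux in
theorem Tstar_eq_sum_properDivisors (n : ℕ) (hn : 2 ≤ n) :
    (T n : ℤ) - T (n - 1) = ∑ r ∈ n.properDivisors, (T (r - 1) : ℤ) := by
  classical
  have hn0 : n ≠ 0 := by omega
  -- rewrite T n via the recursion
  have hTn : T n = 1 + ∑ r ∈ n.divisors.filter (2 ≤ ·), (A (r - 1)).ncard := by
    rw [T_eq_ncard n (by omega), ncard_A n (by omega)]
  -- split off r = n from the filtered divisors
  have hsplit : n.divisors.filter (2 ≤ ·)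
      = insert n (n.properDivisors.filter (2 ≤ ·)) := by
    rw [← Nat.insert_self_properDivisors hn0, Finset.filter_insert]
    simp [hn]
  have hnnotmem : n ∉ n.properDivisors.filter (2 ≤ ·) := by
    simp [Nat.properDivisors]
  have hsum : ∑ r ∈ n.divisors.filter (2 ≤ ·), (A (r - 1)).ncard
      = (A (n - 1)).ncard + ∑ r ∈ n.properDivisors.filter (2 ≤ ·), (A (r - 1)).ncard := by
    rw [hsplit, Finset.sum_insert hnnotmem]
  -- T equals ncard on the relevant arguments
  have hTn1 : T (n - 1) = (A (n - 1)).ncard := T_eq_ncard _ (by omega)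
  have hTr : ∀ r ∈ n.properDivisors.filter (2 ≤ ·), (T (r - 1) : ℤ) = (A (r - 1)).ncard := by
    intro r hr
    simp only [Finset.mem_filter] at hr
    rw [T_eq_ncard (r - 1) (by omega)]
  -- split properDivisors as 1 plus the rest
  have h1mem : 1 ∈ n.properDivisors := Nat.one_mem_properDivisors_iff_one_lt.mpr (by omega)
  have hPD : n.properDivisors = insert 1 (n.properDivisors.filter (2 ≤ ·)) := by
    ext r
    simp only [Finset.mem_insert, Finset.mem_filter]
    constructor
    · intro hr
      rcases eq_or_ne r 1 with rfl | hne
      · left; rfl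
      · right
        refine ⟨hr, ?_⟩
        have : 0 < r := Nat.pos_of_mem_properDivisors hr
        omega
    · rintro (rfl | ⟨hr, -⟩)
      · exact h1mem
      · exact hr
  have h1notmem : (1 : ℕ) ∉ n.properDivisors.filter (2 ≤ ·) := by simp
  rw [hPD, Finset.sum_insert h1notmem]
  have hT0 : T (1 - 1) = 1 := rfl
  rw [hT0, Finset.sum_congr rfl hTr]
  rw [hTn, hTn1, hsum]
  push_cast
  ring
end
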